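/- Let a, b ∈ ℝ with b > 0, let θ ∈ ℂ with 0 < |θ| < 1, set λ = a − b(θ + θ⁻¹), and suppose 𝔟(k) → b as k → ∞. Let x : ℕ → ℂ be a solution of the Jacobi difference equation with coefficients (𝔞, 𝔟) and spectral parameter λ such that x(k)·θ^{−k} → 1 as k → ∞. Then the series ∑_{k=1}^{∞} |x(k)|² converges and 𝔟(0)·{x, x̄}(0) = b·(θ̄ − θ)·(|θ|^{−2} − 1)·∑_{k=1}^{∞} |x(k)|², where {x,y}(k) = x(k)y(k+1) − x(k+1)y(k) and x̄ is the complex conjugate sequence. -/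

import Mathlib

open Complex Filter

/-- The Jacobi difference equation: for all `k ≥ 1`,
`-𝔟(k-1)·x(k-1) + 𝔞(k)·x(k) - 𝔟(k)·x(k+1) = λ·x(k)` (here written with `k+1` in place of `k`). -/
def IsJacobiSolution (𝔞 𝔟 : ℕ → ℝ) (lam : ℂ) (x : ℕ → ℂ) : Prop :=
  ∀ k : ℕ, -(𝔟 k : ℂ) * x k + (𝔞 (k + 1) : ℂ) * x (k + 1) - (𝔟 (k + 1) : ℂ) * x (k + 2)
    = lam * x (k + 1)

/-- Discrete Wronskian `{x,y}(k) = x(k)y(k+1) − x(k+1)y(k)`. -/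
def discrWronskian (x y : ℕ → ℂ) (k : ℕ) : ℂ := x k * y (k + 1) - x (k + 1) * y k

set_option maxHeartbeats 1000000

theorem jost_wronskian_boundary_inside (a b : ℝ) (hb : 0 < b) (θ : ℂ)
    (hθ0 : 0 < ‖θ‖) (hθ1 : ‖θ‖ < 1)
    (𝔞 𝔟 : ℕ → ℝ) (h𝔟 : ∀ k, 0 < 𝔟 k)
    (h𝔟lim : Tendsto 𝔟 atTop (nhds b))
    (x : ℕ → ℂ) (hx : IsJacobiSolution 𝔞 𝔟 (a - b * (θ + θ⁻¹)) x)
    (hjost : Tendsto (fun k : ℕ => x k * θ⁻¹ ^ k) atTop (nhds 1)) :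
    Summable (fun k : ℕ => (‖x (k + 1)‖) ^ 2) ∧
    (𝔟 0 : ℂ) * discrWronskian x (fun k => (starRingEnd ℂ) (x k)) 0
      = (b : ℂ) * ((starRingEnd ℂ) θ - θ) * (((‖θ‖ : ℂ) ^ 2)⁻¹ - 1)
        * ∑' k : ℕ, ((‖x (k + 1)‖ : ℂ)) ^ 2 := by
  have hθne : θ ≠ 0 := by
    intro h; rw [h] at hθ0; simp at hθ0
  have hcne : (starRingEnd ℂ) θ ≠ 0 := by simpa using hθne
  -- x tends to 0
  have hθpow : Tendsto (fun k : ℕ => θ ^ k) atTop (nhds 0) := by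
    apply tendsto_pow_atTop_nhds_zero_of_norm_lt_one
    simpa using hθ1
  have hx0 : Tendsto x atTop (nhds 0) := by
    have h := hjost.mul hθpow
    rw [mul_zero] at h
    have he : (fun k : ℕ => x k * θ⁻¹ ^ k * θ ^ k) = x := by
      funext k
      rw [mul_assoc, ← mul_pow, inv_mul_cancel₀ hθne, one_pow, mul_one]
    rwa [he] at h
  -- summability
  set t : ℝ := ‖θ‖ with ht
  have htabs : Tendsto (fun k : ℕ => ‖x k‖ * t⁻¹ ^ k) atTop (nhds 1) := by
    have h := hjost.norm
    simp only [norm_mul, norm_pow, norm_one, norm_inv] at h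
    exact h
  have hu : Tendsto (fun k : ℕ => (‖x k‖ * t⁻¹ ^ k) ^ 2) atTop (nhds 1) := by
    simpa using htabs.pow 2
  have hfact : ∀ k : ℕ, ‖x k‖ ^ 2
      = (‖x k‖ * t⁻¹ ^ k) ^ 2 * (t ^ 2) ^ k := by
    intro k
    have h1 : t⁻¹ ^ k * t ^ k = 1 := by
      rw [← mul_pow, inv_mul_cancel₀ hθ0.ne', one_pow]
    calc ‖x k‖ ^ 2 = ‖x k‖ ^ 2 * (t⁻¹ ^ k * t ^ k) ^ 2 := by
          rw [h1, one_pow, mul_one]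
      _ = (‖x k‖ * t⁻¹ ^ k) ^ 2 * (t ^ 2) ^ k := by ring
  have hgeo : Summable (fun k : ℕ => (t ^ 2) ^ k) :=
    summable_geometric_of_lt_one (by positivity) (by nlinarith)
  have hO : (fun k : ℕ => ‖x k‖ ^ 2) =O[atTop] (fun k : ℕ => (t ^ 2) ^ k) := by
    have h1 := (hu.isBigO_one ℝ).mul
      (Asymptotics.isBigO_refl (fun k : ℕ => (t ^ 2) ^ k) atTop)
    simp only [one_mul] at h1
    exact h1.congr (fun k => (hfact k).symm) (fun k => rfl)
  have hsumR : Summable (fun k : ℕ => ‖x k‖ ^ 2) :=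
    summable_of_isBigO_nat hgeo hO
  have hsum1 : Summable (fun k : ℕ => ‖x (k + 1)‖ ^ 2) :=
    (summable_nat_add_iff 1).mpr hsumR
  -- the complex sum
  have hmc : ∀ z : ℂ, ((‖z‖ : ℂ)) ^ 2 = z * (starRingEnd ℂ) z := by
    intro z
    rw [Complex.mul_conj, ← Complex.ofReal_pow, Complex.sq_norm]
  have hsumC : Summable (fun k : ℕ => x (k + 1) * (starRingEnd ℂ) (x (k + 1))) := by
    have h := (Complex.summable_ofReal (f := fun k : ℕ => ‖x (k + 1)‖ ^ 2)).mpr hsum1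
    refine h.congr fun k => ?_
    rw [← hmc]
    push_cast
    ring
  -- Wronskian telescope
  set W : ℕ → ℂ := fun k => (𝔟 k : ℂ) * discrWronskian x (fun j => (starRingEnd ℂ) (x j)) k
    with hWdef
  set lam : ℂ := (a : ℂ) - (b : ℂ) * (θ + θ⁻¹) with hlam
  set mu : ℂ := (a : ℂ) - (b : ℂ) * ((starRingEnd ℂ) θ + ((starRingEnd ℂ) θ)⁻¹) with hmu
  have key : ∀ k : ℕ, W (k + 1) = W k
      + (lam - mu) * (x (k + 1) * (starRingEnd ℂ) (x (k + 1))) := by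
    intro k
    have h1 := hx k
    have h2 := congrArg (starRingEnd ℂ) (hx k)
    rw [hlam] at h2
    simp only [map_add, map_sub, map_mul, map_neg, map_inv₀, Complex.conj_ofReal] at h2
    simp only [hWdef, discrWronskian, hlam, hmu]
    linear_combination (starRingEnd ℂ) (x (k + 1)) * h1 - x (k + 1) * h2
  have hpart : ∀ N : ℕ, W N = W 0
      + (lam - mu) * ∑ k ∈ Finset.range N, x (k + 1) * (starRingEnd ℂ) (x (k + 1)) := by
    intro N
    induction N with
    | zero => simp
    | succ n ih => rw [key n, ih, Finset.sum_range_succ]; ring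
  -- limits
  have hconj0 : Tendsto (fun k : ℕ => (starRingEnd ℂ) (x k)) atTop (nhds 0) := by
    have := hx0.star
    simpa using this
  have hxs : Tendsto (fun k : ℕ => x (k + 1)) atTop (nhds 0) :=
    hx0.comp (tendsto_add_atTop_nat 1)
  have hconjs : Tendsto (fun k : ℕ => (starRingEnd ℂ) (x (k + 1))) atTop (nhds 0) :=
    hconj0.comp (tendsto_add_atTop_nat 1)
  have hWlim : Tendsto W atTop (nhds 0) := by
    have hd : Tendsto (fun k : ℕ => discrWronskian x (fun j => (starRingEnd ℂ) (x j)) k)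
        atTop (nhds 0) := by
      have := (hx0.mul hconjs).sub (hxs.mul hconj0)
      simpa [discrWronskian] using this
    have hb' : Tendsto (fun k : ℕ => ((𝔟 k : ℝ) : ℂ)) atTop (nhds (b : ℂ)) :=
      (Complex.continuous_ofReal.tendsto b).comp h𝔟lim
    have := hb'.mul hd
    simpa [hWdef] using this
  set T : ℂ := ∑' k : ℕ, x (k + 1) * (starRingEnd ℂ) (x (k + 1)) with hT
  have hRlim : Tendsto W atTop (nhds (W 0 + (lam - mu) * T)) := by
    have hs := hsumC.hasSum.tendsto_sum_nat
    have := (tendsto_const_nhds (x := W 0) (f := atTop)).add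
      ((tendsto_const_nhds (x := lam - mu) (f := atTop)).mul hs)
    exact this.congr fun N => (hpart N).symm
  have h0 : W 0 + (lam - mu) * T = 0 := tendsto_nhds_unique hRlim hWlim
  have hW0 : W 0 = (mu - lam) * T := by linear_combination h0
  -- coefficient identity
  have habsne : ((‖θ‖ : ℝ) : ℂ) ≠ 0 := by
    exact_mod_cast hθ0.ne'
  have hcabs : ((‖θ‖ : ℝ) : ℂ) ^ 2 = θ * (starRingEnd ℂ) θ := hmc θ
  have hcoef : mu - lam = (b : ℂ) * ((starRingEnd ℂ) θ - θ) * (((‖θ‖ : ℂ) ^ 2)⁻¹ - 1) := by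
    rw [hmu, hlam, hcabs]
    field_simp
    ring
  -- tsum identity
  have htsum : (∑' k : ℕ, ((‖x (k + 1)‖ : ℂ)) ^ 2) = T := by
    rw [hT]
    exact tsum_congr fun k => hmc _
  refine ⟨hsum1, ?_⟩
  have : (𝔟 0 : ℂ) * discrWronskian x (fun k => (starRingEnd ℂ) (x k)) 0 = W 0 := rfl
  rw [this, hW0, hcoef, htsum]
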